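/- For points on a line, the minimum of cost(ρ^l, ρ^r) = Σ_{p∈P} max{I_{ρ^l}(p), I_{ρ^r}(p)} over all valid left-right assignments equals the minimum of I(G_ρ) over all valid range assignments ρ, where I_{ρ^l}(p) = |{q ≠ p : |pq| ≤ ρ^l(p)}| and I_{ρ^r}(p) = |{q ≠ p : |pq| ≤ ρ^r(p)}|. -/

import Mathlib

open Finset

/-- for points on a line, the minimum of
`cost(ρˡ,ρʳ) = Σ_p max(I_{ρˡ}(p), I_{ρʳ}(p))` over valid left-right assignments equals the
minimum total interference `I(G_ρ)` over valid range assignments. -/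
theorem min_leftRight_cost_eq_min_interference {n : ℕ} (p : Fin n → ℝ) (hp : StrictMono p) :
    sInf {c : ℕ | ∃ ρl ρr : Fin n → ℝ, (∀ i, 0 ≤ ρl i) ∧ (∀ i, 0 ≤ ρr i) ∧
        (∀ a b : Fin n, Relation.ReflTransGen
          (fun u v : Fin n => (u < v ∧ p v - p u ≤ ρr u) ∨ (v < u ∧ p u - p v ≤ ρl u)) a b) ∧
        c = ∑ i : Fin n,
          max ((univ.filter (fun j => j ≠ i ∧ |p i - p j| ≤ ρl i)).card)
              ((univ.filter (fun j => j ≠ i ∧ |p i - p j| ≤ ρr i)).card)}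
      = sInf {c : ℕ | ∃ ρ : Fin n → ℝ, (∀ i, 0 ≤ ρ i) ∧
          (∀ a b : Fin n, Relation.ReflTransGen
            (fun u v : Fin n => |p u - p v| ≤ ρ u) a b) ∧
          c = ∑ i : Fin n, (univ.filter (fun j => j ≠ i ∧ |p i - p j| ≤ ρ i)).card} := by
  have hsub : ∀ (i : Fin n) (a b : ℝ), a ≤ b →
      (univ.filter (fun j => j ≠ i ∧ |p i - p j| ≤ a)) ⊆
        univ.filter (fun j => j ≠ i ∧ |p i - p j| ≤ b) := by
    intro i a b hab
    intro j hj
    simp only [Finset.mem_filter] at hj ⊢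
    exact ⟨hj.1, hj.2.1, hj.2.2.trans hab⟩
  congr 1
  ext c
  simp only [Set.mem_setOf_eq]
  constructor
  · rintro ⟨ρl, ρr, hl, hr, hconn, rfl⟩
    refine ⟨fun i => max (ρl i) (ρr i), fun i => le_max_of_le_left (hl i), ?_, ?_⟩
    · intro a b
      refine Relation.ReflTransGen.mono ?_ _ _ (hconn a b)
      rintro u v (⟨huv, h⟩ | ⟨hvu, h⟩)
      · rw [abs_sub_comm, abs_of_nonneg (sub_nonneg.2 (hp huv).le)]
        exact h.trans (le_max_right _ _)
      · rw [abs_of_nonneg (sub_nonneg.2 (hp hvu).le)]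
        exact h.trans (le_max_left _ _)
    · refine Finset.sum_congr rfl fun i _ => ?_
      rcases le_total (ρl i) (ρr i) with h | h
      · rw [max_eq_right (Finset.card_le_card (hsub i _ _ h))]
        congr 1
        simp only [max_eq_right h]
      · rw [max_eq_left (Finset.card_le_card (hsub i _ _ h))]
        congr 1
        simp only [max_eq_left h]
  · rintro ⟨ρ, h0, hconn, rfl⟩
    refine ⟨ρ, ρ, h0, h0, ?_, by simp [max_self]⟩
    intro a b
    induction hconn a b with
    | refl => exact .refl
    | @tail u v _ hstep ih =>
      rcases lt_trichotomy u v with h | h | h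
      · refine ih.tail (Or.inl ⟨h, ?_⟩)
        rwa [abs_sub_comm, abs_of_nonneg (sub_nonneg.2 (hp h).le)] at hstep
      · exact h ▸ ih
      · refine ih.tail (Or.inr ⟨h, ?_⟩)
        rwa [abs_of_nonneg (sub_nonneg.2 (hp h).le)] at hstep
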